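/- Let A be a nontrivial commutative unital C*-algebra that is Rickart, i.e. for every x ∈ A there exists a projection p ∈ A such that for all y ∈ A: x·y = 0 if and only if p·y = y. Let Proj(A) = {p ∈ A | p* = p = p²}, partially ordered by p ≤ q iff p·q = p. Then there is an order isomorphism between the lattice of open subsets of the Gelfand spectrum of A (the character space of A, i.e. the space of nonzero unital ⋆-algebra homomorphisms A → ℂ with the weak-* topology) ordered by inclusion, and the set of ideals of Proj(A) (nonempty, downward-closed, upward-directed subsets of Proj(A)) ordered by inclusion. -/

import Mathlib

/-- An ideal of the projection lattice `Proj(A)` (projections ordered by `p ≤ q ↔ p·q = p`):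
a nonempty, downward-closed, upward-directed set of projections. -/
def IsProjIdeal {A : Type*} [CStarAlgebra A]
    (S : Set {p : A // star p = p ∧ p * p = p}) : Prop :=
  S.Nonempty ∧
  (∀ p q : {p : A // star p = p ∧ p * p = p}, (p : A) * (q : A) = (p : A) → q ∈ S → p ∈ S) ∧
  (∀ p ∈ S, ∀ q ∈ S, ∃ r ∈ S,
      (p : A) * (r : A) = (p : A) ∧ (q : A) * (r : A) = (q : A))

namespace ProjIdealAux

open WeakDual TopologicalSpace Set

variable {A : Type*} [CommCStarAlgebra A]

/-- Projections of `A`. -/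
abbrev Proj (A : Type*) [CStarAlgebra A] := {p : A // star p = p ∧ p * p = p}

/-- The support of a projection in the character space. -/
def supp (p : Proj A) : Set (characterSpace ℂ A) := {φ | φ (p : A) ≠ 0}

lemma char_proj_eq_one {p : Proj A} {φ : characterSpace ℂ A} (h : φ (p : A) ≠ 0) :
    φ (p : A) = 1 := by
  have h2 : φ (p : A) * φ (p : A) = φ (p : A) * 1 := by
    rw [← map_mul, p.2.2, mul_one]
  exact mul_left_cancel₀ h h2

lemma isOpen_supp (p : Proj A) : IsOpen (supp p) := by
  have : supp p = (WeakDual.gelfandTransform ℂ A (p : A)) ⁻¹' {0}ᶜ := rfl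
  rw [this]
  exact (isClosed_singleton.preimage
    (WeakDual.gelfandTransform ℂ A (p : A)).continuous).isOpen_compl

lemma isClosed_supp (p : Proj A) : IsClosed (supp p) := by
  have : supp p = (WeakDual.gelfandTransform ℂ A (p : A)) ⁻¹' {1} := by
    ext φ
    simp only [supp, Set.mem_setOf_eq, Set.mem_preimage, Set.mem_singleton_iff,
      WeakDual.gelfandTransform_apply_apply]
    constructor
    · exact char_proj_eq_one
    · intro h; rw [h]; exact one_ne_zero
  rw [this]
  exact isClosed_singleton.preimage (WeakDual.gelfandTransform ℂ A (p : A)).continuous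

/-- Characters separate points (Gelfand transform injectivity). -/
lemma ext_char {x y : A} (h : ∀ φ : characterSpace ℂ A, φ x = φ y) : x = y := by
  apply (gelfandTransform_isometry A).injective
  ext φ
  simpa using h φ

/-- Surjectivity of the Gelfand transform. -/
lemma surj_char (f : C(characterSpace ℂ A, ℂ)) : ∃ x : A, ∀ φ, φ x = f φ := by
  obtain ⟨x, hx⟩ := (gelfandTransform_bijective A).2 f
  exact ⟨x, fun φ => by rw [← hx]; rfl⟩

/-- The ideal of projections supported in `U`. -/
def idealOf (U : Set (characterSpace ℂ A)) : Set (Proj A) := {p | supp p ⊆ U}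

/-- The open set associated to a set of projections. -/
def openOf (S : Set (Proj A)) : Set (characterSpace ℂ A) := ⋃ p ∈ S, supp p

lemma isOpen_openOf (S : Set (Proj A)) : IsOpen (openOf S) :=
  isOpen_biUnion fun p _ => isOpen_supp p

lemma supp_subset_of_le {p q : Proj A} (h : (p : A) * (q : A) = (p : A)) :
    supp p ⊆ supp q := by
  intro φ hφ
  simp only [supp, Set.mem_setOf_eq] at hφ ⊢
  intro hq
  apply hφ
  rw [← h, map_mul, hq, mul_zero]

lemma idealOf_isProjIdeal (U : Set (characterSpace ℂ A)) : IsProjIdeal (idealOf U) := by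
  refine ⟨⟨⟨0, by simp⟩, ?_⟩, ?_, ?_⟩
  · intro φ hφ
    simp only [supp, Set.mem_setOf_eq, map_zero, ne_eq, not_true_eq_false] at hφ
  · intro p q h hq
    exact (supp_subset_of_le h).trans hq
  · rintro p hp q hq
    have hps := p.2.1; have hpp := p.2.2
    have hqs := q.2.1; have hqp := q.2.2
    refine ⟨⟨(p : A) + q - p * q, ?_, ?_⟩, ?_, ?_, ?_⟩
    · rw [star_sub, star_add, star_mul, hps, hqs, mul_comm]
    · linear_combination (1 - 2 * (q : A) + (q : A) * q) * hpp + (1 - (p : A)) * hqp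
    · intro φ hφ
      simp only [supp, Set.mem_setOf_eq, map_sub, map_add, map_mul] at hφ
      by_cases h1 : φ (p : A) = 0
      · by_cases h2 : φ (q : A) = 0
        · exfalso; apply hφ; rw [h1, h2]; ring
        · exact hq h2
      · exact hp h1
    · linear_combination (1 - (q : A)) * hpp
    · linear_combination (1 - (p : A)) * hqp

/-- Complexification of a real continuous map. -/
noncomputable def cplx (f : C(characterSpace ℂ A, ℝ)) : C(characterSpace ℂ A, ℂ) :=
  ⟨fun φ => (f φ : ℂ), Complex.continuous_ofReal.comp f.continuous⟩

lemma openOf_idealOf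
    (hRickart : ∀ x : A, ∃ p : A, (star p = p ∧ p * p = p) ∧ ∀ y : A, x * y = 0 ↔ p * y = y)
    (U : Set (characterSpace ℂ A)) (hU : IsOpen U) :
    openOf (idealOf U) = U := by
  apply Set.Subset.antisymm
  · intro φ hφ
    simp only [openOf, Set.mem_iUnion] at hφ
    obtain ⟨p, hp, hφp⟩ := hφ
    exact hp hφp
  · intro φ hφ
    obtain ⟨f, hf0, hf1, _⟩ := exists_continuous_zero_one_of_isClosed
      (isClosed_singleton (x := φ)) hU.isClosed_compl
      (Set.disjoint_singleton_left.mpr (by simpa using hφ))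
    have hd1 : Disjoint {ψ | f ψ ≤ 1/2} Uᶜ := by
      rw [Set.disjoint_left]
      intro ψ hψ hψc
      have h1 := hf1 hψc
      simp only [Pi.one_apply] at h1
      simp only [Set.mem_setOf_eq, h1] at hψ
      linarith
    obtain ⟨f', hf'0, hf'1, _⟩ := exists_continuous_zero_one_of_isClosed
      (isClosed_le f.continuous continuous_const) hU.isClosed_compl hd1
    have hd2 : Disjoint {ψ | 1/2 ≤ f ψ} ({φ} : Set (characterSpace ℂ A)) := by
      rw [Set.disjoint_right]
      intro ψ hψ
      simp only [Set.mem_singleton_iff] at hψ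
      subst hψ
      have h0 := hf0 rfl
      simp only [Pi.zero_apply] at h0
      simp only [Set.mem_setOf_eq, h0]
      norm_num
    obtain ⟨g, hg0, hg1, _⟩ := exists_continuous_zero_one_of_isClosed
      (isClosed_le continuous_const f.continuous) isClosed_singleton hd2
    obtain ⟨x, hx⟩ := surj_char (cplx f')
    obtain ⟨y, hy⟩ := surj_char (cplx g)
    have hxy : x * y = 0 := by
      apply ext_char
      intro ψ
      rw [map_mul, map_zero, hx, hy]
      simp only [cplx, ContinuousMap.coe_mk]
      rw [← Complex.ofReal_mul, Complex.ofReal_eq_zero]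
      by_cases h : f ψ ≤ 1/2
      · have h0 := hf'0 h
        simp only [Pi.zero_apply] at h0
        rw [h0, zero_mul]
      · have h0 := hg0 (le_of_lt (not_le.mp h))
        simp only [Pi.zero_apply] at h0
        rw [h0, mul_zero]
    obtain ⟨p, ⟨hps, hpp⟩, hpRick⟩ := hRickart x
    set P : Proj A := ⟨p, hps, hpp⟩ with hP
    have hxp : x * p = 0 := (hpRick p).mpr hpp
    have hPU : P ∈ idealOf U := by
      intro ψ hψ
      have hψ1 : ψ (P : A) = 1 := char_proj_eq_one hψ
      have hψx : ψ x = 0 := by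
        have h2 : ψ (x * p) = ψ 0 := congrArg ψ hxp
        rw [map_mul, map_zero] at h2
        have : ψ (P : A) = ψ p := rfl
        rw [← this, hψ1, mul_one] at h2
        exact h2
      have hf'ψ : f' ψ = 0 := by
        have h2 := hx ψ
        rw [hψx] at h2
        simp only [cplx, ContinuousMap.coe_mk] at h2
        exact_mod_cast h2.symm
      by_contra hψU
      have h1 := hf'1 hψU
      simp only [Pi.one_apply] at h1
      rw [hf'ψ] at h1
      norm_num at h1
    have hpy : p * y = y := (hpRick y).mp hxy
    have hφy : φ y = 1 := by
      rw [hy]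
      simp only [cplx, ContinuousMap.coe_mk]
      have h1 := hg1 rfl
      simp only [Pi.one_apply] at h1
      rw [h1]; norm_num
    have hφp : φ (P : A) ≠ 0 := by
      intro h0
      have h2 : φ (p * y) = φ y := congrArg φ hpy
      rw [map_mul] at h2
      have : φ (P : A) = φ p := rfl
      rw [← this, h0, zero_mul] at h2
      rw [← h2] at hφy
      norm_num at hφy
    exact Set.mem_biUnion hPU hφp

lemma finset_upper_bound {S : Set (Proj A)} (hne : S.Nonempty)
    (hdir : ∀ p ∈ S, ∀ q ∈ S, ∃ r ∈ S,
      (p : A) * (r : A) = (p : A) ∧ (q : A) * (r : A) = (q : A))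
    (t : Finset S) :
    ∃ r ∈ S, ∀ q ∈ t, ((q : Proj A) : A) * (r : A) = ((q : Proj A) : A) := by
  classical
  induction t using Finset.induction_on with
  | empty => exact ⟨hne.choose, hne.choose_spec, fun q hq => absurd hq (Finset.notMem_empty q)⟩
  | insert _ _ ha ih =>
    rename_i a t
    obtain ⟨r, hr, hrall⟩ := ih
    obtain ⟨s, hs, has, hrs⟩ := hdir (a : Proj A) a.2 r hr
    refine ⟨s, hs, fun q hq => ?_⟩
    rcases Finset.mem_insert.mp hq with h | h
    · subst h; exact has
    · have hqr := hrall q h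
      calc ((q : Proj A) : A) * (s : A) = (((q : Proj A) : A) * (r : A)) * (s : A) := by
            rw [hqr]
        _ = ((q : Proj A) : A) * ((r : A) * (s : A)) := by rw [mul_assoc]
        _ = ((q : Proj A) : A) * (r : A) := by rw [hrs]
        _ = ((q : Proj A) : A) := hqr

lemma idealOf_openOf {S : Set (Proj A)} (hS : IsProjIdeal S) : idealOf (openOf S) = S := by
  obtain ⟨hne, hdown, hdir⟩ := hS
  apply Set.Subset.antisymm
  · intro p hp
    have hcov : supp p ⊆ ⋃ q : S, supp (q : Proj A) := by
      intro φ hφ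
      obtain ⟨q, hq, hφq⟩ := Set.mem_iUnion₂.mp (hp hφ)
      exact Set.mem_iUnion.mpr ⟨⟨q, hq⟩, hφq⟩
    obtain ⟨t, ht⟩ := ((isClosed_supp p).isCompact).elim_finite_subcover
      (fun q : S => supp (q : Proj A)) (fun q => isOpen_supp _) hcov
    obtain ⟨r, hr, hrall⟩ := finset_upper_bound hne hdir t
    have hsupp : supp p ⊆ supp r := by
      intro φ hφ
      obtain ⟨q, hq, hφq⟩ := Set.mem_iUnion₂.mp (ht hφ)
      exact supp_subset_of_le (hrall q hq) hφq
    have hpr : (p : A) * (r : A) = (p : A) := by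
      apply ext_char
      intro φ
      rw [map_mul]
      by_cases h : φ (p : A) = 0
      · rw [h, zero_mul]
      · rw [char_proj_eq_one (hsupp h), mul_one]
    exact hdown p r hpr hr
  · intro p hp
    exact fun φ hφ => Set.mem_biUnion hp hφ

end ProjIdealAux

/-- For a nontrivial commutative Rickart C*-algebra `A`, the frame of open subsets of the
Gelfand spectrum (character space) of `A` is order isomorphic to the set of ideals of the
projection lattice `Proj(A)`, both ordered by inclusion. -/
theorem gelfandSpectrum_opens_orderIso_projIdeals {A : Type*} [CommCStarAlgebra A]
    [Nontrivial A]
    (hRickart : ∀ x : A, ∃ p : A, (star p = p ∧ p * p = p) ∧ ∀ y : A, x * y = 0 ↔ p * y = y) :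
    Nonempty (TopologicalSpace.Opens (WeakDual.characterSpace ℂ A) ≃o
      {S : Set {p : A // star p = p ∧ p * p = p} // IsProjIdeal S}) := by
  open ProjIdealAux in
  refine ⟨{
    toFun := fun U => ⟨idealOf (U : Set (WeakDual.characterSpace ℂ A)),
      idealOf_isProjIdeal _⟩
    invFun := fun S => ⟨openOf S.1, isOpen_openOf S.1⟩
    left_inv := fun U => by
      ext1
      exact openOf_idealOf hRickart (U : Set (WeakDual.characterSpace ℂ A)) U.2
    right_inv := fun S => by
      ext1
      exact idealOf_openOf S.2
    map_rel_iff' := by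
      intro U V
      constructor
      · intro h
        have h' : idealOf (U : Set (WeakDual.characterSpace ℂ A)) ⊆
            idealOf (V : Set (WeakDual.characterSpace ℂ A)) := h
        have h2 : openOf (idealOf (U : Set (WeakDual.characterSpace ℂ A))) ⊆
            openOf (idealOf (V : Set (WeakDual.characterSpace ℂ A))) :=
          Set.biUnion_subset_biUnion_left h'
        rw [openOf_idealOf hRickart _ U.isOpen, openOf_idealOf hRickart _ V.isOpen] at h2
        exact SetLike.coe_subset_coe.mp h2
      · intro h p hp
        exact fun φ hφ => h (hp hφ) }⟩
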